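/- For every integer q ≥ 4 and all words x ∈ {1,…,q}^m, y ∈ {1,…,q}^n (m, n ≥ 0), ∑_{a=1}^q P(xay) = P(x)·P(y), where xay is the concatenation of x, the letter a, and y. (This is the 1-dependence property of P.) -/

import Mathlib

open Polynomial Polynomial.Chebyshev

/-- `C n = T_{|n|}(√q/2)`; Mathlib's `T` is even in its integer index. -/
noncomputable def C (q : ℝ) (n : ℤ) : ℝ := (T ℝ n).eval (Real.sqrt q / 2)

/-- `D n = √q · U_{n-1}(√q/2)`, the odd extension (`D 0 = 0`). -/
noncomputable def D (q : ℝ) (n : ℤ) : ℝ := Real.sqrt q * (U ℝ (n - 1)).eval (Real.sqrt q / 2)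

/-- A word is a proper coloring if no two consecutive letters are equal. -/
def Proper {q : ℕ} (x : List (Fin q)) : Prop := x.Chain' (· ≠ ·)

instance {q : ℕ} (x : List (Fin q)) : Decidable (Proper x) := by
  unfold Proper List.Chain'; infer_instance

/-- The recursively defined cylinder measure: `P [] = 1`, `P x = 0` for non-proper `x`,
and `P x = (1/D(n+1)) ∑_{i=1}^n C(n-2i+1) P(x̂ᵢ)` for proper `x` of length `n`,
where `x̂ᵢ` deletes the `i`-th letter (here indexed from `0`, so the coefficient of
`x.eraseIdx i` is `C(n - 2(i+1) + 1) = C(n - 2i - 1)`). -/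
noncomputable def P (q : ℕ) : List (Fin q) → ℝ
  | [] => 1
  | a :: l =>
    if Proper (a :: l) then
      (1 / D q (((a :: l).length : ℤ) + 1)) *
        ∑ i : Fin (a :: l).length,
          C q (((a :: l).length : ℤ) - 2 * (i : ℤ) - 1) * P q ((a :: l).eraseIdx i)
    else 0
termination_by x => x.length
decreasing_by
  have := i.isLt
  simp only [List.length_eraseIdx, this, if_pos]
  omega

section ChebAlg

variable {q : ℝ}

lemma C_zero : _root_.C q 0 = 1 := by simp [_root_.C]

lemma C_one : _root_.C q 1 = Real.sqrt q / 2 := by simp [_root_.C]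

lemma C_neg (n : ℤ) : _root_.C q (-n) = _root_.C q n := by unfold _root_.C; rw [T_neg]

lemma C_add_two (n : ℤ) : _root_.C q (n + 2) = Real.sqrt q * _root_.C q (n + 1) - _root_.C q n := by
  unfold _root_.C; rw [T_add_two]; simp only [eval_sub, eval_mul, eval_ofNat, eval_X]; ring

lemma D_zero : D q 0 = 0 := by
  unfold D; norm_num [U_neg_one]

lemma D_one : D q 1 = Real.sqrt q := by unfold D; norm_num

lemma D_neg (n : ℤ) : D q (-n) = -D q n := by
  unfold D
  rw [U_neg_sub_one]
  simp only [eval_neg]; ring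

lemma D_add_two (n : ℤ) : D q (n + 2) = Real.sqrt q * D q (n + 1) - D q n := by
  unfold D
  rw [show n + 2 - 1 = (n - 1) + 2 by ring, U_add_two]
  simp; ring

variable (hq : 0 ≤ q)
include hq

lemma sqrt_mul_sqrt : Real.sqrt q * Real.sqrt q = q := Real.mul_self_sqrt hq

lemma C_two : _root_.C q 2 = q / 2 - 1 := by
  unfold _root_.C; rw [T_two]
  have h := Real.sq_sqrt hq
  simp only [eval_sub, eval_mul, eval_pow, eval_ofNat, eval_X, eval_one]
  rw [div_pow, h]; ring

lemma D_two : D q 2 = q := by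
  unfold D; norm_num [U_one]
  linear_combination sqrt_mul_sqrt hq

omit hq in
/-- two sequences satisfying the same 2-step recurrence and agreeing at 0, 1 agree. -/
lemma cheb_ext {k : ℝ} {f g : ℤ → ℝ} (hf : ∀ n, f (n + 2) = k * f (n + 1) - f n)
    (hg : ∀ n, g (n + 2) = k * g (n + 1) - g n) (h0 : f 0 = g 0) (h1 : f 1 = g 1) :
    ∀ n, f n = g n := by
  have H : ∀ n : ℤ, f n = g n ∧ f (n + 1) = g (n + 1) := by
    intro n
    induction n using Int.induction_on with
    | zero => exact ⟨h0, h1⟩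
    | succ i ih =>
      refine ⟨ih.2, ?_⟩
      have e1 := hf i; have e2 := hg i
      rw [show (i : ℤ) + 1 + 1 = i + 2 by ring, e1, e2, ih.1, ih.2]
    | pred i ih =>
      have e1 := hf (-(i:ℤ) - 1); have e2 := hg (-(i:ℤ) - 1)
      rw [show -(i:ℤ) - 1 + 2 = -i + 1 by ring, show -(i:ℤ) - 1 + 1 = -i by ring] at e1 e2
      constructor
      · have h1' : f (-(i:ℤ) - 1) = k * f (-(i:ℤ)) - f (-(i:ℤ) + 1) := by linarith [e1]
        have h2' : g (-(i:ℤ) - 1) = k * g (-(i:ℤ)) - g (-(i:ℤ) + 1) := by linarith [e2]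
        rw [h1', h2', ih.1, ih.2]
      · rw [show -(i:ℤ) - 1 + 1 = -(i:ℤ) by ring]; exact ih.1
  exact fun n => (H n).1

omit hq in
lemma C_add_C_sub (a b : ℤ) : _root_.C q (a + b) + _root_.C q (a - b) = 2 * _root_.C q a * _root_.C q b := by
  have h := Polynomial.Chebyshev.T_mul_T ℝ a b
  have h2 := congrArg (Polynomial.eval (Real.sqrt q / 2)) h
  simpa [_root_.C, mul_assoc] using h2.symm

lemma D_add_one (a : ℤ) : D q (a + 1) = D q a * _root_.C q 1 + _root_.C q a * D q 1 := by
  refine cheb_ext (k := Real.sqrt q) (f := fun a => D q (a+1))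
    (g := fun a => D q a * _root_.C q 1 + _root_.C q a * D q 1) (fun n => ?_) (fun n => ?_) ?_ ?_ a
  · show D q (n + 2 + 1) = _
    rw [show n + 2 + 1 = (n + 1) + 2 by ring, D_add_two]
  · show D q (n+2) * _ + _root_.C q (n+2) * _ = _
    rw [D_add_two, _root_.C_add_two]; ring
  · show D q 1 = D q 0 * _root_.C q 1 + _root_.C q 0 * D q 1
    rw [D_zero, _root_.C_zero]; ring
  · show D q 2 = D q 1 * _root_.C q 1 + _root_.C q 1 * D q 1
    rw [D_two hq, D_one, _root_.C_one]
    linear_combination -sqrt_mul_sqrt hq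

lemma D_add (a b : ℤ) : D q (a + b) = D q a * _root_.C q b + _root_.C q a * D q b := by
  refine cheb_ext (k := Real.sqrt q) (f := fun b => D q (a + b))
    (g := fun b => D q a * _root_.C q b + _root_.C q a * D q b) (fun n => ?_) (fun n => ?_) ?_ ?_ b
  · show D q (a + (n + 2)) = _
    rw [show a + (n + 2) = (a + n) + 2 by ring, D_add_two,
      show a + n + 1 = a + (n+1) by ring]
  · show D q a * _root_.C q (n + 2) + _root_.C q a * D q (n + 2) = _
    rw [D_add_two, _root_.C_add_two]; ring
  · show D q (a + 0) = D q a * _root_.C q 0 + _root_.C q a * D q 0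
    rw [add_zero, _root_.C_zero, D_zero]; ring
  · show D q (a + 1) = _
    exact D_add_one hq a

lemma D_sub (a b : ℤ) : D q (a - b) = D q a * _root_.C q b - _root_.C q a * D q b := by
  rw [sub_eq_add_neg, D_add hq, _root_.C_neg, D_neg]; ring

end ChebAlg

section Mixed

variable {q : ℝ} (hq : 4 ≤ q)
include hq

lemma q_pos : (0:ℝ) < q := by linarith

lemma C_mixed_one (a : ℤ) :
    _root_.C q (a + 1) = _root_.C q a * _root_.C q 1 + ((q - 4) / (4 * q)) * (D q a * D q 1) := by
  have h0 : (0:ℝ) ≤ q := by linarith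
  refine cheb_ext (k := Real.sqrt q) (f := fun a => _root_.C q (a+1))
    (g := fun a => _root_.C q a * _root_.C q 1 + ((q - 4) / (4 * q)) * (D q a * D q 1))
    (fun n => ?_) (fun n => ?_) ?_ ?_ a
  · show _root_.C q (n + 2 + 1) = _
    rw [show n + 2 + 1 = (n + 1) + 2 by ring, _root_.C_add_two]
  · show _root_.C q (n+2) * _ + _ * (D q (n+2) * _) = _
    rw [D_add_two, _root_.C_add_two]; ring
  · show _root_.C q 1 = _root_.C q 0 * _root_.C q 1 + _ * (D q 0 * D q 1)
    rw [D_zero, _root_.C_zero]; ring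
  · show _root_.C q 2 = _root_.C q 1 * _root_.C q 1 + _ * (D q 1 * D q 1)
    rw [C_two h0, _root_.C_one, D_one, sqrt_mul_sqrt h0]
    have hq0 : q ≠ 0 := ne_of_gt (q_pos hq)
    field_simp; ring_nf; rw [Real.sq_sqrt h0]; ring

lemma C_mixed (a b : ℤ) :
    _root_.C q (a + b) = _root_.C q a * _root_.C q b + ((q - 4) / (4 * q)) * (D q a * D q b) := by
  have h0 : (0:ℝ) ≤ q := by linarith
  refine cheb_ext (k := Real.sqrt q) (f := fun b => _root_.C q (a + b))
    (g := fun b => _root_.C q a * _root_.C q b + ((q - 4) / (4 * q)) * (D q a * D q b))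
    (fun n => ?_) (fun n => ?_) ?_ ?_ b
  · show _root_.C q (a + (n + 2)) = _
    rw [show a + (n + 2) = (a + n) + 2 by ring, _root_.C_add_two,
      show a + n + 1 = a + (n+1) by ring]
  · show _root_.C q a * _root_.C q (n+2) + _ * (D q a * D q (n+2)) = _
    rw [D_add_two, _root_.C_add_two]; ring
  · show _root_.C q (a + 0) = _root_.C q a * _root_.C q 0 + _ * (D q a * D q 0)
    rw [add_zero, _root_.C_zero, D_zero]; ring
  · show _root_.C q (a + 1) = _
    exact C_mixed_one hq a

lemma C_sub_mixed (a b : ℤ) :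
    _root_.C q (a - b) = _root_.C q a * _root_.C q b - ((q - 4) / (4 * q)) * (D q a * D q b) := by
  rw [sub_eq_add_neg, C_mixed hq, _root_.C_neg, D_neg]; ring

lemma sqrt_q_ge_two : (2:ℝ) ≤ Real.sqrt q := by
  have h : (2:ℝ) = Real.sqrt 4 := by
    rw [show (4:ℝ) = 2^2 by norm_num, Real.sqrt_sq (by norm_num)]
  rw [h]; exact Real.sqrt_le_sqrt hq

lemma D_pos : ∀ n : ℤ, 1 ≤ n → 0 < D q n := by
  have h0 : (0:ℝ) ≤ q := by linarith
  have hs := sqrt_q_ge_two hq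
  have key : ∀ n : ℕ, 0 < D q (n + 1) ∧ D q (n + 1) ≤ D q ((n:ℤ) + 1 + 1) := by
    intro n
    induction n with
    | zero =>
      simp only [Nat.cast_zero, zero_add]
      constructor
      · simpa [D_one] using (by linarith : (0:ℝ) < Real.sqrt q)
      · rw [D_one, show (1:ℤ) + 1 = 2 by ring, D_two h0]
        nlinarith [sqrt_mul_sqrt h0]
    | succ n ih =>
      have hrec : D q ((n:ℤ) + 1 + 2) = Real.sqrt q * D q ((n:ℤ) + 1 + 1) - D q ((n:ℤ) + 1) :=
        D_add_two _
      constructor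
      · push_cast
        nlinarith [ih.1, ih.2]
      · push_cast
        rw [show ((n:ℤ)+1+1+1) = (n:ℤ)+1+2 by ring, hrec]
        nlinarith [ih.1, ih.2]
  intro n hn
  obtain ⟨m, rfl⟩ : ∃ m : ℕ, n = (m : ℤ) + 1 := ⟨(n - 1).toNat, by omega⟩
  exact (key m).1

end Mixed


section Plists

variable {q : ℕ}

lemma proper_iff {w : List (Fin q)} :
    Proper w ↔ ∀ i : ℕ, ∀ h : i + 1 < w.length, w[i] ≠ w[i + 1] := by
  rw [Proper, List.Chain', List.isChain_iff_getElem]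

lemma not_proper {w : List (Fin q)} {k : ℕ} (hk : k + 1 < w.length)
    (he : w[k] = w[k + 1]) : ¬ Proper w := fun hp => (proper_iff.mp hp) k hk he

lemma P_nil : P q [] = 1 := by rw [P]

lemma P_not_proper {w : List (Fin q)} (hw : ¬ Proper w) : P q w = 0 := by
  cases w with
  | nil => exact absurd List.isChain_nil hw
  | cons a l => rw [P, if_neg hw]

lemma eraseIdx_commute (l : List (Fin q)) {u j : ℕ} (hu : u ≤ j) (hj : j + 1 < l.length) :
    (l.eraseIdx u).eraseIdx j = (l.eraseIdx (j + 1)).eraseIdx u := by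
  apply List.ext_getElem
  · simp only [List.length_eraseIdx]
    split_ifs <;> omega
  · intro n h1 h2
    have hl1 : n < (l.eraseIdx u).length := by
      simp only [List.length_eraseIdx] at h1 ⊢; split_ifs at h1 ⊢ <;> omega
    have hl2 : n < (l.eraseIdx (j + 1)).length := by
      simp only [List.length_eraseIdx] at h2 ⊢; split_ifs at h2 ⊢ <;> omega
    rcases Nat.lt_or_ge n u with hA | hA
    · rw [List.getElem_eraseIdx_of_lt h1 (by omega),
        List.getElem_eraseIdx_of_lt hl1 hA,
        List.getElem_eraseIdx_of_lt h2 hA,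
        List.getElem_eraseIdx_of_lt hl2 (by omega)]
    · rcases Nat.lt_or_ge n j with hB | hB
      · rw [List.getElem_eraseIdx_of_lt h1 hB,
          List.getElem_eraseIdx_of_ge hl1 hA,
          List.getElem_eraseIdx_of_ge h2 hA]
        have hl3 : n + 1 < (l.eraseIdx (j + 1)).length := by
          simp only [List.length_eraseIdx] at h2 ⊢; split_ifs at h2 ⊢ <;> omega
        rw [List.getElem_eraseIdx_of_lt hl3 (by omega)]
      · rw [List.getElem_eraseIdx_of_ge h1 hB,
          List.getElem_eraseIdx_of_ge h2 hA]
        have hl3 : n + 1 < (l.eraseIdx u).length := by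
          simp only [List.length_eraseIdx] at h1 ⊢; split_ifs at h1 ⊢ <;> omega
        have hl4 : n + 1 < (l.eraseIdx (j + 1)).length := by
          simp only [List.length_eraseIdx] at h2 ⊢; split_ifs at h2 ⊢ <;> omega
        rw [List.getElem_eraseIdx_of_ge hl3 (by omega),
          List.getElem_eraseIdx_of_ge hl4 (by omega)]

lemma eraseIdx_succ_eq (l : List (Fin q)) {k : ℕ} (hk : k + 1 < l.length)
    (he : l[k] = l[k + 1]) : l.eraseIdx k = l.eraseIdx (k + 1) := by
  apply List.ext_getElem
  · simp only [List.length_eraseIdx]; split_ifs <;> omega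
  · intro n h1 h2
    rcases Nat.lt_or_ge n k with hA | hA
    · rw [List.getElem_eraseIdx_of_lt h1 hA,
        List.getElem_eraseIdx_of_lt h2 (by omega)]
    · rcases Nat.eq_or_lt_of_le hA with hB | hB
      · rw [List.getElem_eraseIdx_of_ge h1 (by omega),
          List.getElem_eraseIdx_of_lt h2 (by omega)]
        subst hB; exact he.symm
      · rw [List.getElem_eraseIdx_of_ge h1 (by omega),
          List.getElem_eraseIdx_of_ge h2 (by omega)]

variable (hq : 4 ≤ q)
include hq

lemma hq4 : (4:ℝ) ≤ ((q:ℕ):ℝ) := by exact_mod_cast hq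

lemma D_ne {n : ℤ} (hn : 1 ≤ n) : D (q:ℝ) n ≠ 0 := ne_of_gt (D_pos (hq4 hq) n hn)

lemma P_rec {w : List (Fin q)} (hw : Proper w) (hne : w ≠ []) :
    D q ((w.length : ℤ) + 1) * P q w
      = ∑ i : Fin w.length, C q ((w.length : ℤ) - 2 * (i : ℤ) - 1) * P q (w.eraseIdx i) := by
  cases w with
  | nil => exact absurd rfl hne
  | cons a l =>
    rw [P, if_pos hw, ← mul_assoc, mul_one_div,
      div_self (D_ne hq (by omega)), one_mul]

omit hq in
lemma sum_twobad {w : List (Fin q)} {k : ℕ} (hk : k + 2 < w.length)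
    (e1 : w[k] = w[k + 1]) (e2 : w[k + 1] = w[k + 2]) (f : ℕ → ℝ) :
    ∑ j : Fin w.length, f j * P q (w.eraseIdx j) = 0 := by
  apply Finset.sum_eq_zero
  intro j _
  apply mul_eq_zero_of_right
  apply P_not_proper
  have hjl := j.isLt
  have hb : k + 1 < (w.eraseIdx (j:ℕ)).length := by
    simp only [List.length_eraseIdx]; split_ifs <;> omega
  refine not_proper (k := k) hb ?_
  rcases Nat.lt_or_ge k (j:ℕ) with hA | hA
  · rw [List.getElem_eraseIdx_of_lt (by omega) hA]
    rcases Nat.lt_or_ge (k+1) (j:ℕ) with hB | hB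
    · rw [List.getElem_eraseIdx_of_lt hb hB]; exact e1
    · rw [List.getElem_eraseIdx_of_ge hb hB]; exact e1.trans e2
  · rw [List.getElem_eraseIdx_of_ge (by omega) hA,
      List.getElem_eraseIdx_of_ge hb (by omega)]
    exact e2

omit hq in
lemma sum_onebad {w : List (Fin q)} {k : ℕ} (hk : k + 1 < w.length)
    (he : w[k] = w[k + 1])
    (f : ℕ → ℝ) :
    ∑ j : Fin w.length, f j * P q (w.eraseIdx j)
      = (f k + f (k + 1)) * P q (w.eraseIdx k) := by
  have hkk : (⟨k, by omega⟩ : Fin w.length) ≠ ⟨k + 1, by omega⟩ := by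
    simp [Fin.ext_iff]
  have key := Finset.sum_eq_add (s := (Finset.univ : Finset (Fin w.length)))
      (f := fun j : Fin w.length => f j * P q (w.eraseIdx j))
      ⟨k, by omega⟩ ⟨k + 1, by omega⟩ hkk ?_ ?_ ?_
  · rw [key]
    show f k * P q (w.eraseIdx k) + f (k + 1) * P q (w.eraseIdx (k + 1)) = _
    rw [← eraseIdx_succ_eq w hk he]; ring
  · intro c _ hc
    obtain ⟨hc1, hc2⟩ := hc
    have hj1 : (c : ℕ) ≠ k := by simpa [Fin.ext_iff] using hc1
    have hj2 : (c : ℕ) ≠ k + 1 := by simpa [Fin.ext_iff] using hc2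
    have hcl := c.isLt
    apply mul_eq_zero_of_right
    apply P_not_proper
    rcases lt_or_gt_of_ne hj1 with hlt | hgt
    · -- c < k : bad pair at k-1 in the erased word
      have hb : k - 1 + 1 < (w.eraseIdx (c:ℕ)).length := by
        simp only [List.length_eraseIdx]; split_ifs <;> omega
      refine not_proper (k := k - 1) hb ?_
      rw [List.getElem_eraseIdx_of_ge (by omega) (by omega),
        List.getElem_eraseIdx_of_ge hb (by omega)]
      have e1 : k - 1 + 1 = k := by omega
      simp only [e1]
      exact he
    · -- c ≥ k+2 : bad pair at k
      have hb : k + 1 < (w.eraseIdx (c:ℕ)).length := by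
        simp only [List.length_eraseIdx]; split_ifs <;> omega
      refine not_proper (k := k) hb ?_
      rw [List.getElem_eraseIdx_of_lt (by omega) (by omega),
        List.getElem_eraseIdx_of_lt hb (by omega)]
      exact he
  · intro h; exact absurd (Finset.mem_univ _) h
  · intro h; exact absurd (Finset.mem_univ _) h

end Plists


section LemmaL

variable {q : ℕ}

lemma sum_len_congr {N M : ℕ} (h : N = M) (f : ℕ → ℝ) :
    ∑ j : Fin N, f (j : ℕ) = ∑ j : Fin M, f (j : ℕ) := by subst h; rfl

set_option maxHeartbeats 2000000 in
lemma lemL (hq : 4 ≤ q) : ∀ m : ℕ, ∀ x : List (Fin q), x.length ≤ m → Proper x →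
    ∑ v : Fin x.length, D q ((x.length : ℤ) - 2 * (v : ℤ) - 1) * P q (x.eraseIdx (v : ℕ)) = 0 := by
  have h0q : (0:ℝ) ≤ (q:ℝ) := by positivity
  intro m
  induction m with
  | zero =>
    intro x hlen _
    have h0 : x.length = 0 := by omega
    have he : (Finset.univ : Finset (Fin x.length)) = ∅ := by
      rw [Finset.univ_eq_empty_iff, h0]
      exact Fin.isEmpty'
    rw [he, Finset.sum_empty]
  | succ m ih =>
    intro x hlen hx
    rcases Nat.lt_or_ge x.length (m + 1) with hlt | hge
    · exact ih x (by omega) hx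
    have hm : x.length = m + 1 := by omega
    rcases Nat.eq_zero_or_pos m with rfl | hm1
    · -- length 1 : the only coefficient is D 0 = 0
      apply Finset.sum_eq_zero
      intro v _
      have hv := v.isLt
      have hz : ((x.length : ℤ) - 2 * (v : ℤ) - 1) = 0 := by omega
      rw [hz, D_zero, zero_mul]
    have hn2 : 2 ≤ x.length := by omega
    set n := x.length with hndef
    -- Claim 0 : the purely antisymmetric double sum vanishes
    have claim0 : ∑ p : Fin n × Fin (n - 1),
        D q (2 * (p.2 : ℤ) - 2 * (p.1 : ℤ) + 1)
          * P q ((x.eraseIdx (p.1 : ℕ)).eraseIdx (p.2 : ℕ)) = 0 := by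
      refine Finset.sum_involution
        (fun p _ => if h : (p.1 : ℕ) ≤ (p.2 : ℕ) then
            (⟨(p.2 : ℕ) + 1, by have := p.2.isLt; omega⟩,
             ⟨(p.1 : ℕ), by have := p.2.isLt; omega⟩)
          else
            (⟨(p.2 : ℕ), by have := p.2.isLt; omega⟩,
             ⟨(p.1 : ℕ) - 1, by have := p.1.isLt; omega⟩))
        ?_ ?_ (fun p ha => Finset.mem_univ _) ?_
      · rintro ⟨v, j⟩ _
        dsimp only
        by_cases h : (v : ℕ) ≤ (j : ℕ)
        · rw [dif_pos h]
          dsimp only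
          rw [eraseIdx_commute x h (by have := j.isLt; omega)]
          rw [show (2 * ((v:ℕ) : ℤ) - 2 * (((j:ℕ) + 1 : ℕ) : ℤ) + 1)
              = -(2 * (j : ℤ) - 2 * (v : ℤ) + 1) by push_cast; ring, D_neg]
          ring
        · rw [dif_neg h]
          dsimp only
          have hv1 : 1 ≤ (v : ℕ) := by omega
          have hcomm := eraseIdx_commute x (u := (j : ℕ)) (j := (v : ℕ) - 1)
            (by omega) (by have := v.isLt; omega)
          rw [show (v : ℕ) - 1 + 1 = (v : ℕ) by omega] at hcomm
          rw [← hcomm]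
          rw [show ((((v:ℕ) - 1 : ℕ)) : ℤ) = (v : ℤ) - 1 by omega]
          rw [show (2 * ((v : ℤ) - 1) - 2 * ((j:ℕ) : ℤ) + 1)
              = -(2 * (j : ℤ) - 2 * (v : ℤ) + 1) by push_cast; ring, D_neg]
          ring
      · rintro ⟨v, j⟩ _ hf0
        dsimp only at hf0 ⊢
        by_cases h : (v : ℕ) ≤ (j : ℕ)
        · rw [dif_pos h]
          intro hcon
          rw [Prod.ext_iff] at hcon
          have h1 : (j : ℕ) + 1 = (v : ℕ) := by
            simpa [Fin.ext_iff] using hcon.1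
          omega
        · rw [dif_neg h]
          intro hcon
          rw [Prod.ext_iff] at hcon
          have h1 : (j : ℕ) = (v : ℕ) := by
            simpa [Fin.ext_iff] using hcon.1
          omega
      · rintro ⟨v, j⟩ _
        dsimp only
        by_cases h : (v : ℕ) ≤ (j : ℕ)
        · rw [dif_pos h]
          rw [dif_neg (by dsimp only; omega)]
          dsimp only
          refine Prod.ext ?_ ?_ <;> simp [Fin.ext_iff]
        · rw [dif_neg h]
          rw [dif_pos (by dsimp only; omega)]
          dsimp only
          refine Prod.ext ?_ ?_ <;> simp [Fin.ext_iff] <;> omega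
    rw [Fintype.sum_prod_type] at claim0
    dsimp only at claim0
    -- rewrite the summand using D_sub
    have claim1 : ∑ v : Fin n,
        (D q ((n : ℤ) - 2 * (v : ℤ) - 1) *
            ∑ j : Fin ((x.eraseIdx (v : ℕ)).length),
              C q (((x.eraseIdx (v : ℕ)).length : ℤ) - 2 * (j : ℤ) - 1)
                * P q ((x.eraseIdx (v : ℕ)).eraseIdx (j : ℕ))
          - C q ((n : ℤ) - 2 * (v : ℤ) - 1) *
            ∑ j : Fin ((x.eraseIdx (v : ℕ)).length),
              D q (((x.eraseIdx (v : ℕ)).length : ℤ) - 2 * (j : ℤ) - 1)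
                * P q ((x.eraseIdx (v : ℕ)).eraseIdx (j : ℕ))) = 0 := by
      rw [← claim0]
      apply Finset.sum_congr rfl
      intro v _
      have hvl := v.isLt
      have hlenv : (x.eraseIdx (v : ℕ)).length = n - 1 := by
        rw [List.length_eraseIdx, if_pos hvl]
      rw [Finset.mul_sum, Finset.mul_sum, ← Finset.sum_sub_distrib]
      refine Eq.trans (Finset.sum_congr rfl ?_)
        (sum_len_congr hlenv (fun jn : ℕ => D (q : ℝ) (2 * (jn : ℤ) - 2 * (v : ℤ) + 1)
          * P q ((x.eraseIdx (v : ℕ)).eraseIdx jn)))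
      intro j _
      have e := D_sub h0q ((n : ℤ) - 2 * (v : ℤ) - 1)
        (((x.eraseIdx (v : ℕ)).length : ℤ) - 2 * (j : ℤ) - 1)
      show _ = D (q : ℝ) (2 * (j : ℤ) - 2 * (v : ℤ) + 1)
          * P q ((x.eraseIdx (v : ℕ)).eraseIdx (j : ℕ))
      rw [show (2 * (j : ℤ) - 2 * (v : ℤ) + 1)
          = ((n : ℤ) - 2 * (v : ℤ) - 1) - (((x.eraseIdx (v : ℕ)).length : ℤ) - 2 * (j : ℤ) - 1) by
        omega, e]
      ring
    -- evaluate each inner sum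
    have perv : ∀ v : Fin n,
        (D q ((n : ℤ) - 2 * (v : ℤ) - 1) *
            ∑ j : Fin ((x.eraseIdx (v : ℕ)).length),
              C q (((x.eraseIdx (v : ℕ)).length : ℤ) - 2 * (j : ℤ) - 1)
                * P q ((x.eraseIdx (v : ℕ)).eraseIdx (j : ℕ))
          - C q ((n : ℤ) - 2 * (v : ℤ) - 1) *
            ∑ j : Fin ((x.eraseIdx (v : ℕ)).length),
              D q (((x.eraseIdx (v : ℕ)).length : ℤ) - 2 * (j : ℤ) - 1)
                * P q ((x.eraseIdx (v : ℕ)).eraseIdx (j : ℕ)))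
        = D q (n : ℤ) * (D q ((n : ℤ) - 2 * (v : ℤ) - 1) * P q (x.eraseIdx (v : ℕ))) := by
      intro v
      have hvl := v.isLt
      have hlenv : (x.eraseIdx (v : ℕ)).length = n - 1 := by
        rw [List.length_eraseIdx, if_pos hvl]
      by_cases hp : Proper (x.eraseIdx (v : ℕ))
      · -- proper case : recursion + induction hypothesis
        have hne : x.eraseIdx (v : ℕ) ≠ [] := by
          apply List.ne_nil_of_length_pos
          omega
        have h1 := P_rec hq hp hne
        have h2 := ih (x.eraseIdx (v : ℕ)) (by omega) hp
        rw [← h1, h2, mul_zero, sub_zero,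
          show (((x.eraseIdx (v : ℕ)).length : ℤ) + 1) = (n : ℤ) by omega]
        ring
      · -- improper case : one bad pair at position v-1
        rw [proper_iff] at hp
        push_neg at hp
        obtain ⟨jb, hjb0, hbe⟩ := hp
        have hjb : jb + 1 < n - 1 := by rw [hlenv] at hjb0; exact hjb0
        have hxp := proper_iff.mp hx
        -- locate the bad pair : jb = v - 1
        have hjv : jb + 1 = (v : ℕ) := by
          by_contra hcon
          rcases Nat.lt_or_ge (jb + 1) (v : ℕ) with hA | hA
          · have e1 : (x.eraseIdx (v : ℕ))[jb]'(by omega) = x[jb]'(by omega) :=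
              List.getElem_eraseIdx_of_lt (by omega) (by omega)
            have e2 : (x.eraseIdx (v : ℕ))[jb + 1]'(by omega) = x[jb + 1]'(by omega) :=
              List.getElem_eraseIdx_of_lt (by omega) (by omega)
            exact hxp jb (by omega) (e1 ▸ e2 ▸ hbe)
          · have hA' : (v : ℕ) ≤ jb := by omega
            have e1 : (x.eraseIdx (v : ℕ))[jb]'(by omega) = x[jb + 1]'(by omega) :=
              List.getElem_eraseIdx_of_ge (by omega) (by omega)
            have e2 : (x.eraseIdx (v : ℕ))[jb + 1]'(by omega) = x[jb + 1 + 1]'(by omega) :=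
              List.getElem_eraseIdx_of_ge (by omega) (by omega)
            exact hxp (jb + 1) (by omega) (e1 ▸ e2 ▸ hbe)
        have hv1 : 1 ≤ (v : ℕ) := by omega
        have hv2 : (v : ℕ) + 1 < n := by omega
        have hbk : jb = (v : ℕ) - 1 := by omega
        subst hbk
        have hPv : P q (x.eraseIdx (v : ℕ)) = 0 := by
          apply P_not_proper
          rw [proper_iff]
          push_neg
          exact ⟨(v : ℕ) - 1, hjb0, hbe⟩
        have s1 : ∑ j : Fin ((x.eraseIdx (v : ℕ)).length),
              C q (((x.eraseIdx (v : ℕ)).length : ℤ) - 2 * (j : ℤ) - 1)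
                * P q ((x.eraseIdx (v : ℕ)).eraseIdx (j : ℕ))
            = (C q (((x.eraseIdx (v : ℕ)).length : ℤ) - 2 * ((((v : ℕ) - 1 : ℕ)) : ℤ) - 1)
              + C q (((x.eraseIdx (v : ℕ)).length : ℤ) - 2 * ((((v : ℕ) - 1 + 1 : ℕ)) : ℤ) - 1))
              * P q ((x.eraseIdx (v : ℕ)).eraseIdx ((v : ℕ) - 1)) :=
          sum_onebad hjb0 hbe
            (fun jn : ℕ => C (q : ℝ) (((x.eraseIdx (v : ℕ)).length : ℤ) - 2 * (jn : ℤ) - 1))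
        have s2 : ∑ j : Fin ((x.eraseIdx (v : ℕ)).length),
              D q (((x.eraseIdx (v : ℕ)).length : ℤ) - 2 * (j : ℤ) - 1)
                * P q ((x.eraseIdx (v : ℕ)).eraseIdx (j : ℕ))
            = (D q (((x.eraseIdx (v : ℕ)).length : ℤ) - 2 * ((((v : ℕ) - 1 : ℕ)) : ℤ) - 1)
              + D q (((x.eraseIdx (v : ℕ)).length : ℤ) - 2 * ((((v : ℕ) - 1 + 1 : ℕ)) : ℤ) - 1))
              * P q ((x.eraseIdx (v : ℕ)).eraseIdx ((v : ℕ) - 1)) :=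
          sum_onebad hjb0 hbe
            (fun jn : ℕ => D (q : ℝ) (((x.eraseIdx (v : ℕ)).length : ℤ) - 2 * (jn : ℤ) - 1))
        rw [s1, s2, hPv, mul_zero]
        have hX : (((x.eraseIdx (v : ℕ)).length : ℤ) - 2 * ((((v : ℕ) - 1 : ℕ)) : ℤ) - 1)
            = ((n : ℤ) - 2 * (v : ℤ) - 1) + 1 := by
          omega
        have hY : (((x.eraseIdx (v : ℕ)).length : ℤ) - 2 * ((((v : ℕ) - 1 + 1 : ℕ)) : ℤ) - 1)
            = ((n : ℤ) - 2 * (v : ℤ) - 1) - 1 := by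
          omega
        rw [hX, hY]
        have e1 := D_sub h0q ((n : ℤ) - 2 * (v : ℤ) - 1) (((n : ℤ) - 2 * (v : ℤ) - 1) + 1)
        rw [show ((n : ℤ) - 2 * (v : ℤ) - 1) - (((n : ℤ) - 2 * (v : ℤ) - 1) + 1) = (-1 : ℤ)
          by ring] at e1
        have e2 := D_sub h0q ((n : ℤ) - 2 * (v : ℤ) - 1) (((n : ℤ) - 2 * (v : ℤ) - 1) - 1)
        rw [show ((n : ℤ) - 2 * (v : ℤ) - 1) - (((n : ℤ) - 2 * (v : ℤ) - 1) - 1) = (1 : ℤ)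
          by ring] at e2
        have e3 : D (q : ℝ) (-1) = - D (q : ℝ) 1 := by
          rw [show (-1 : ℤ) = -(1 : ℤ) by ring, D_neg]
        set p := P q ((x.eraseIdx (v : ℕ)).eraseIdx ((v : ℕ) - 1)) with hpdef
        linear_combination (-p) * e1 + (-p) * e2 + p * e3
    -- put everything together
    have final : D q (n : ℤ) *
        ∑ v : Fin n, D q ((n : ℤ) - 2 * (v : ℤ) - 1) * P q (x.eraseIdx (v : ℕ)) = 0 :=
      Eq.trans (Finset.mul_sum _ _ _)
        (Eq.trans (Finset.sum_congr rfl (fun v _ => (perv v).symm)) claim1)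
    rcases mul_eq_zero.mp final with h | h
    · exact absurd h (D_ne hq (by omega))
    · exact h

end LemmaL


section MainHelpers

variable {q : ℕ}

lemma len_z (x y : List (Fin q)) (a : Fin q) :
    (x ++ a :: y).length = x.length + (y.length + 1) := by
  simp only [List.length_append, List.length_cons]

lemma z_get_lt {x : List (Fin q)} (y : List (Fin q)) (a : Fin q) {j : ℕ} (hj : j < x.length) :
    (x ++ a :: y)[j]'(by rw [len_z]; omega) = x[j] :=
  List.getElem_append_left hj

lemma z_get_mid (x y : List (Fin q)) (a : Fin q) :
    (x ++ a :: y)[x.length]'(by rw [len_z]; omega) = a := by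
  rw [List.getElem_append_right (le_refl x.length)]
  simp

lemma z_get_hi (x : List (Fin q)) {y : List (Fin q)} (a : Fin q) {j : ℕ} (hj : j < y.length) :
    (x ++ a :: y)[x.length + 1 + j]'(by rw [len_z]; omega) = y[j] := by
  rw [List.getElem_append_right (by omega : x.length ≤ x.length + 1 + j)]
  have h1 : x.length + 1 + j - x.length = j + 1 := by omega
  simp only [h1, List.getElem_cons_succ]

lemma ez_lt {x : List (Fin q)} (y : List (Fin q)) (a : Fin q) {j : ℕ} (hj : j < x.length) :
    (x ++ a :: y).eraseIdx j = (x.eraseIdx j) ++ a :: y :=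
  List.eraseIdx_append_of_lt_length hj _

lemma ez_mid (x y : List (Fin q)) (a : Fin q) :
    (x ++ a :: y).eraseIdx x.length = x ++ y := by
  rw [List.eraseIdx_append_of_length_le (le_refl _), Nat.sub_self]
  rfl

lemma ez_hi (x : List (Fin q)) (y : List (Fin q)) (a : Fin q) (j : ℕ) :
    (x ++ a :: y).eraseIdx (x.length + (j + 1)) = x ++ a :: (y.eraseIdx j) := by
  rw [List.eraseIdx_append_of_length_le (by omega)]
  have h1 : x.length + (j + 1) - x.length = j + 1 := by omega
  rw [h1, List.eraseIdx_cons_succ]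

lemma proper_z {x y : List (Fin q)} {a : Fin q} (hx : Proper x) (hy : Proper y)
    (hb : ∀ h : 0 < x.length, x[x.length - 1]'(by omega) ≠ a)
    (hc : ∀ h : 0 < y.length, a ≠ y[0]) : Proper (x ++ a :: y) := by
  rw [proper_iff]
  intro i hi
  rw [len_z] at hi
  rcases Nat.lt_or_ge (i + 1) x.length with h1 | h1
  · rw [z_get_lt y a (by omega), z_get_lt y a h1]
    exact proper_iff.mp hx i h1
  · rcases Nat.lt_or_ge i x.length with h2 | h2
    · -- i = x.length - 1
      have h3 : i = x.length - 1 := by omega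
      have h4 : i + 1 = x.length := by omega
      rw [z_get_lt y a h2]
      have h5 : (x ++ a :: y)[i + 1]'(by rw [len_z]; omega) = a := by
        rw [show (x ++ a :: y)[i + 1]'(by rw [len_z]; omega)
            = (x ++ a :: y)[x.length]'(by rw [len_z]; omega) by congr 1 <;> omega, z_get_mid]
      rw [h5]
      have h7 : x[i]'(by omega) = x[x.length - 1]'(by omega) := by congr 1 <;> omega
      rw [h7]
      exact hb (by omega)
    · rcases Nat.eq_or_lt_of_le h2 with h3 | h3
      · -- i = x.length
        have h5 : (x ++ a :: y)[i]'(by rw [len_z]; omega) = a := by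
          rw [show (x ++ a :: y)[i]'(by rw [len_z]; omega)
              = (x ++ a :: y)[x.length]'(by rw [len_z]; omega) by congr 1 <;> omega, z_get_mid]
        have h6 : (x ++ a :: y)[i + 1]'(by rw [len_z]; omega) = y[0]'(by omega) := by
          rw [show (x ++ a :: y)[i + 1]'(by rw [len_z]; omega)
              = (x ++ a :: y)[x.length + 1 + 0]'(by rw [len_z]; omega) by congr 1 <;> omega,
            z_get_hi x a (by omega)]
        rw [h5, h6]
        exact hc (by omega)
      · -- i ≥ x.length + 1 : inside y
        have h4 : i - x.length - 1 + 1 < y.length := by omega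
        have h5 : (x ++ a :: y)[i]'(by rw [len_z]; omega)
            = y[i - x.length - 1]'(by omega) := by
          rw [show (x ++ a :: y)[i]'(by rw [len_z]; omega)
              = (x ++ a :: y)[x.length + 1 + (i - x.length - 1)]'(by rw [len_z]; omega) by
            congr 1 <;> omega, z_get_hi x a (by omega)]
        have h6 : (x ++ a :: y)[i + 1]'(by rw [len_z]; omega)
            = y[i - x.length - 1 + 1]'(by omega) := by
          rw [show (x ++ a :: y)[i + 1]'(by rw [len_z]; omega)
              = (x ++ a :: y)[x.length + 1 + (i - x.length - 1 + 1)]'(by rw [len_z]; omega) by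
            congr 1 <;> omega, z_get_hi x a (by omega)]
        rw [h5, h6]
        exact proper_iff.mp hy _ h4

lemma improper_z_left {x : List (Fin q)} (y : List (Fin q)) (a : Fin q) (hx : ¬ Proper x) :
    ¬ Proper (x ++ a :: y) := by
  rw [proper_iff] at hx
  push_neg at hx
  obtain ⟨i, hi, he⟩ := hx
  refine not_proper (k := i) (by rw [len_z]; omega) ?_
  rw [z_get_lt y a (by omega), z_get_lt y a hi]
  exact he

lemma improper_z_right (x : List (Fin q)) {y : List (Fin q)} (a : Fin q) (hy : ¬ Proper y) :
    ¬ Proper (x ++ a :: y) := by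
  rw [proper_iff] at hy
  push_neg at hy
  obtain ⟨i, hi, he⟩ := hy
  refine not_proper (k := x.length + 1 + i) (by rw [len_z]; omega) ?_
  have h6 : (x ++ a :: y)[x.length + 1 + i + 1]'(by rw [len_z]; omega)
      = y[i + 1]'(by omega) := by
    rw [show (x ++ a :: y)[x.length + 1 + i + 1]'(by rw [len_z]; omega)
        = (x ++ a :: y)[x.length + 1 + (i + 1)]'(by rw [len_z]; omega) by congr 1 <;> omega,
      z_get_hi x a (by omega)]
  rw [z_get_hi x a (by omega), h6]
  exact he

lemma improper_append {x y : List (Fin q)} (hx : x ≠ []) (hy : y ≠ [])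
    (he : x[x.length - 1]'(by cases x <;> simp_all) = y[0]'(by cases y <;> simp_all)) :
    ¬ Proper (x ++ y) := by
  have hx0 : 0 < x.length := List.length_pos_iff.mpr hx
  have hy0 : 0 < y.length := List.length_pos_iff.mpr hy
  refine not_proper (k := x.length - 1) (by rw [List.length_append]; omega) ?_
  have e1 : (x ++ y)[x.length - 1]'(by rw [List.length_append]; omega)
      = x[x.length - 1]'(by omega) := List.getElem_append_left (by omega)
  have e2 : (x ++ y)[x.length - 1 + 1]'(by rw [List.length_append]; omega)
      = y[0]'(by omega) := by
    rw [List.getElem_append_right (by omega : x.length ≤ x.length - 1 + 1)]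
    have h0 : x.length - 1 + 1 - x.length = 0 := by omega
    simp only [h0]
  rw [e1, e2]
  exact he

lemma P_single (hq : 4 ≤ q) (a : Fin q) : P q [a] = 1 / (q : ℝ) := by
  have hpa : Proper [a] := List.isChain_singleton a
  have h := P_rec hq hpa (by simp)
  simp only [List.length_singleton] at h
  rw [Fin.sum_univ_one] at h
  have h2 : ((1 : ℕ) : ℤ) - 2 * (((0 : Fin 1) : ℕ) : ℤ) - 1 = 0 := by simp
  rw [h2, _root_.C_zero, one_mul] at h
  have h3 : (([a] : List (Fin q)).eraseIdx (((0 : Fin 1)) : ℕ)) = [] := rfl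
  rw [h3, P_nil] at h
  have h4 : ((1 : ℕ) : ℤ) + 1 = 2 := by norm_num
  rw [h4, D_two (by positivity)] at h
  have hq0 : (q : ℝ) ≠ 0 := Nat.cast_ne_zero.mpr (by omega)
  rw [eq_div_iff hq0]
  linear_combination h

end MainHelpers


section MainAlg

lemma edge_id {Q : ℝ} (h4 : 4 ≤ Q) (k : ℤ) :
    Q * C Q k + C Q 1 * D Q (k + 1) - (C Q k + C Q (k - 2)) = D Q (k + 2) := by
  have h0 : (0:ℝ) ≤ Q := by linarith
  have d2 : D Q (k + 2) = D Q (k + 1) * C Q 1 + C Q (k + 1) * D Q 1 := by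
    have h := D_add h0 (k + 1) 1
    rwa [show k + 1 + 1 = k + 2 by ring] at h
  have s1 : C Q (k + 2) + C Q k = 2 * C Q (k + 1) * C Q 1 := by
    have h := C_add_C_sub (q := Q) (k + 1) 1
    rwa [show k + 1 + 1 = k + 2 by ring, show k + 1 - 1 = k by ring] at h
  have s2 : C Q (k + 2) + C Q (k - 2) = 2 * C Q k * C Q 2 := C_add_C_sub k 2
  have hC2 := C_two h0
  have hC1 : C Q 1 = Real.sqrt Q / 2 := _root_.C_one
  have hD1 : D Q 1 = Real.sqrt Q := D_one
  linear_combination (-1) * d2 - C Q (k + 1) * hD1 + (2 * C Q (k + 1)) * hC1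
    + s1 - s2 + (-2 * C Q k) * hC2

lemma brack {Q : ℝ} (h0 : (0:ℝ) ≤ Q) (k : ℤ) :
    Q * C Q k - (C Q (k + 2) + C Q k) - (C Q k + C Q (k - 2)) = 0 := by
  have s2 : C Q (k + 2) + C Q (k - 2) = 2 * C Q k * C Q 2 := C_add_C_sub k 2
  have hC2 := C_two h0
  linear_combination (-1) * s2 + (-2 * C Q k) * hC2

end MainAlg

section MainThm

variable {q : ℕ}

lemma base_case (hq : 4 ≤ q) :
    ∑ a : Fin q, P q ([] ++ a :: ([] : List (Fin q)))
      = P q ([] : List (Fin q)) * P q ([] : List (Fin q)) := by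
  have hq0 : (q : ℝ) ≠ 0 := Nat.cast_ne_zero.mpr (by omega)
  simp only [List.nil_append, P_nil, mul_one]
  calc ∑ a : Fin q, P q [a] = ∑ _a : Fin q, 1 / (q:ℝ) :=
        Finset.sum_congr rfl (fun a _ => P_single hq a)
    _ = 1 := by
        rw [Finset.sum_const, Finset.card_univ, Fintype.card_fin, nsmul_eq_mul]
        field_simp

lemma improper_left {x : List (Fin q)} (y : List (Fin q)) (hx : ¬ Proper x) :
    ∑ a : Fin q, P q (x ++ a :: y) = P q x * P q y := by
  rw [P_not_proper hx, zero_mul]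
  exact Finset.sum_eq_zero (fun a _ => P_not_proper (improper_z_left y a hx))

lemma improper_right (x : List (Fin q)) {y : List (Fin q)} (hy : ¬ Proper y) :
    ∑ a : Fin q, P q (x ++ a :: y) = P q x * P q y := by
  rw [P_not_proper hy, mul_zero]
  exact Finset.sum_eq_zero (fun a _ => P_not_proper (improper_z_right x a hy))

set_option maxHeartbeats 2000000 in
lemma step_left (hq : 4 ≤ q) {N : ℕ}
    (ih : ∀ x' y' : List (Fin q), x'.length + y'.length ≤ N →
      ∑ a : Fin q, P q (x' ++ a :: y') = P q x' * P q y')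
    {y : List (Fin q)} (hy : Proper y) (hyne : y ≠ []) (hl : y.length ≤ N + 1) :
    ∑ a : Fin q, P q ([] ++ a :: y) = P q ([] : List (Fin q)) * P q y := by
  have h4 : (4:ℝ) ≤ (q:ℝ) := hq4 hq
  have h0 : (0:ℝ) ≤ (q:ℝ) := by linarith
  have hy0 : 0 < y.length := List.length_pos_iff.mpr hyne
  simp only [List.nil_append]
  have key : ∀ a : Fin q, D q ((y.length : ℤ) + 2) * P q (a :: y)
      = (∑ j : Fin (y.length + 1),
          C q ((y.length : ℤ) + 1 - 2 * (j:ℤ) - 1) * P q ((a :: y).eraseIdx (j:ℕ)))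
        - (if a = y[0]'hy0 then
            (C q (y.length : ℤ) + C q ((y.length : ℤ) - 2)) * P q y else 0) := by
    intro a
    have hzl : (a :: y).length = y.length + 1 := by simp
    by_cases hac : a = y[0]'hy0
    · have hbad : (a :: y)[0]'(by simp) = (a :: y)[1]'(by simp; omega) := by
        rw [List.getElem_cons_zero, List.getElem_cons_succ]
        exact hac
      have hPz : P q (a :: y) = 0 :=
        P_not_proper (not_proper (k := 0) (by simp; omega) hbad)
      rw [hPz, mul_zero, if_pos hac]
      have hone := sum_onebad (w := a :: y) (k := 0) (by simp; omega) hbad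
        (fun jn : ℕ => C (q:ℝ) ((y.length : ℤ) + 1 - 2 * (jn:ℤ) - 1))
      have htrans : ∑ j : Fin (y.length + 1),
            C q ((y.length : ℤ) + 1 - 2 * (j:ℤ) - 1) * P q ((a :: y).eraseIdx (j:ℕ))
          = ∑ j : Fin (a :: y).length,
            C q ((y.length : ℤ) + 1 - 2 * (j:ℤ) - 1) * P q ((a :: y).eraseIdx (j:ℕ)) :=
        sum_len_congr hzl.symm
          (fun jn : ℕ => C q ((y.length : ℤ) + 1 - 2 * (jn:ℤ) - 1)
            * P q ((a :: y).eraseIdx jn))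
      rw [htrans, hone,
        show ((y.length : ℤ) + 1 - 2 * ((0:ℕ):ℤ) - 1) = (y.length : ℤ) by push_cast; ring,
        show ((y.length : ℤ) + 1 - 2 * (((0:ℕ)+1:ℕ):ℤ) - 1) = (y.length : ℤ) - 2 by
          push_cast; ring]
      show _ = _ - (C q (y.length : ℤ) + C q ((y.length : ℤ) - 2)) * P q y
      rw [show (a :: y).eraseIdx 0 = y from rfl]
      ring
    · rw [if_neg hac, sub_zero]
      have hpz : Proper (a :: y) :=
        proper_z (x := []) List.isChain_nil hy (fun h => absurd h (by simp)) (fun _ => hac)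
      have hrec := P_rec hq hpz (by simp)
      rw [hzl, Nat.cast_add, Nat.cast_one,
        show ((y.length : ℤ) + 1 + 1) = (y.length : ℤ) + 2 by ring] at hrec
      exact hrec
  have sumkey := Finset.sum_congr rfl (fun a (_ : a ∈ (Finset.univ : Finset (Fin q))) => key a)
  rw [← Finset.mul_sum, Finset.sum_sub_distrib] at sumkey
  have hK : ∑ a : Fin q, (if a = y[0]'hy0 then
      (C q (y.length : ℤ) + C q ((y.length : ℤ) - 2)) * P q y else 0)
      = (C q (y.length : ℤ) + C q ((y.length : ℤ) - 2)) * P q y := by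
    rw [Finset.sum_ite_eq']
    simp
  rw [hK, Finset.sum_comm, Fin.sum_univ_succ] at sumkey
  have hg0 : ∑ a : Fin q,
      C q ((y.length : ℤ) + 1 - 2 * (((0 : Fin (y.length + 1)):ℕ):ℤ) - 1)
        * P q ((a :: y).eraseIdx ((0 : Fin (y.length + 1)):ℕ))
      = (q:ℝ) * (C q (y.length : ℤ) * P q y) := by
    have hco : ((y.length : ℤ) + 1 - 2 * (((0 : Fin (y.length + 1)):ℕ):ℤ) - 1)
        = (y.length : ℤ) := by simp
    rw [hco]
    simp only [show ∀ a : Fin q, (a :: y).eraseIdx ((0 : Fin (y.length + 1)):ℕ) = y from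
      fun a => rfl]
    rw [Finset.sum_const, Finset.card_univ, Fintype.card_fin, nsmul_eq_mul]
  rw [hg0] at sumkey
  have hgs : ∀ j1 : Fin y.length, ∑ a : Fin q,
      C q ((y.length : ℤ) + 1 - 2 * (((j1.succ : Fin (y.length + 1)):ℕ):ℤ) - 1)
        * P q ((a :: y).eraseIdx ((j1.succ : Fin (y.length + 1)):ℕ))
      = C q ((y.length : ℤ) - 2 * (j1:ℤ) - 1 - 1) * P q (y.eraseIdx (j1:ℕ)) := by
    intro j1
    have hval : ((j1.succ : Fin (y.length + 1)) : ℕ) = (j1 : ℕ) + 1 := rfl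
    have hco : ((y.length : ℤ) + 1 - 2 * (((j1.succ : Fin (y.length + 1)):ℕ):ℤ) - 1)
        = ((y.length : ℤ) - 2 * (j1:ℤ) - 1 - 1) := by
      rw [hval]; push_cast; ring
    have her : ∀ a : Fin q, (a :: y).eraseIdx ((j1.succ : Fin (y.length + 1)):ℕ)
        = a :: (y.eraseIdx (j1:ℕ)) := fun a => by
      rw [hval, List.eraseIdx_cons_succ]
    have hih := ih [] (y.eraseIdx (j1:ℕ))
      (by simp only [List.length_nil, List.length_eraseIdx]; split_ifs <;> omega)
    simp only [List.nil_append, P_nil, one_mul] at hih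
    calc ∑ a : Fin q, C q ((y.length : ℤ) + 1 - 2 * (((j1.succ : Fin (y.length + 1)):ℕ):ℤ) - 1)
          * P q ((a :: y).eraseIdx ((j1.succ : Fin (y.length + 1)):ℕ))
        = ∑ a : Fin q, C q ((y.length : ℤ) - 2 * (j1:ℤ) - 1 - 1)
            * P q (a :: (y.eraseIdx (j1:ℕ))) :=
          Finset.sum_congr rfl (fun a _ => by rw [her a, hco])
      _ = C q ((y.length : ℤ) - 2 * (j1:ℤ) - 1 - 1)
            * ∑ a : Fin q, P q (a :: (y.eraseIdx (j1:ℕ))) := by rw [Finset.mul_sum]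
      _ = C q ((y.length : ℤ) - 2 * (j1:ℤ) - 1 - 1) * P q (y.eraseIdx (j1:ℕ)) := by
          rw [hih]
  have hrepl : (∑ j1 : Fin y.length, ∑ a : Fin q,
      C q ((y.length : ℤ) + 1 - 2 * (((j1.succ : Fin (y.length + 1)):ℕ):ℤ) - 1)
        * P q ((a :: y).eraseIdx ((j1.succ : Fin (y.length + 1)):ℕ)))
      = C q 1 * (D q ((y.length : ℤ) + 1) * P q y)
        - (((q:ℝ) - 4) / (4 * (q:ℝ))) * D q 1 * 0 := by
    rw [Finset.sum_congr rfl (fun j1 _ => hgs j1)]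
    have hsplit : ∀ j1 : Fin y.length,
        C q ((y.length : ℤ) - 2 * (j1:ℤ) - 1 - 1) * P q (y.eraseIdx (j1:ℕ))
        = C q 1 * (C q ((y.length : ℤ) - 2 * (j1:ℤ) - 1) * P q (y.eraseIdx (j1:ℕ)))
          - (((q:ℝ) - 4) / (4 * (q:ℝ))) * D q 1
            * (D q ((y.length : ℤ) - 2 * (j1:ℤ) - 1) * P q (y.eraseIdx (j1:ℕ))) := by
      intro j1
      rw [C_sub_mixed h4 ((y.length : ℤ) - 2 * (j1:ℤ) - 1) 1]
      ring
    rw [Finset.sum_congr rfl (fun j1 _ => hsplit j1), Finset.sum_sub_distrib,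
      ← Finset.mul_sum, ← Finset.mul_sum, ← P_rec hq hy hyne,
      lemL hq y.length y (le_refl _) hy]
  rw [hrepl] at sumkey
  rw [P_nil, one_mul]
  apply mul_left_cancel₀ (D_ne hq (show (1:ℤ) ≤ (y.length : ℤ) + 2 by omega))
  rw [sumkey]
  linear_combination (P q y) * edge_id h4 (y.length : ℤ)


set_option maxHeartbeats 2000000 in
lemma step_right (hq : 4 ≤ q) {N : ℕ}
    (ih : ∀ x' y' : List (Fin q), x'.length + y'.length ≤ N →
      ∑ a : Fin q, P q (x' ++ a :: y') = P q x' * P q y')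
    {x : List (Fin q)} (hx : Proper x) (hxne : x ≠ []) (hl : x.length ≤ N + 1) :
    ∑ a : Fin q, P q (x ++ a :: ([] : List (Fin q)))
      = P q x * P q ([] : List (Fin q)) := by
  have h4 : (4:ℝ) ≤ (q:ℝ) := hq4 hq
  have h0 : (0:ℝ) ≤ (q:ℝ) := by linarith
  have hx0 : 0 < x.length := List.length_pos_iff.mpr hxne
  have key : ∀ a : Fin q, D q ((x.length : ℤ) + 2) * P q (x ++ a :: ([] : List (Fin q)))
      = (∑ j : Fin (x.length + 1),
          C q ((((x.length + (0 + 1) : ℕ)) : ℤ) - 2 * (j:ℤ) - 1)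
            * P q ((x ++ a :: ([] : List (Fin q))).eraseIdx (j:ℕ)))
        - (if a = x[x.length - 1]'(by omega) then
            (C q ((x.length : ℤ) - 2) + C q (x.length : ℤ)) * P q x else 0) := by
    intro a
    have hzl : (x ++ a :: ([] : List (Fin q))).length = x.length + 1 := by
      rw [len_z]; rfl
    have hzl' : (x ++ a :: ([] : List (Fin q))).length = x.length + (0 + 1) := by
      rw [len_z]; rfl
    by_cases hab : a = x[x.length - 1]'(by omega)
    · -- one bad pair at x.length - 1
      have hg1 : (x ++ a :: ([] : List (Fin q)))[x.length - 1]'(by rw [hzl]; omega)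
          = x[x.length - 1]'(by omega) := z_get_lt _ a (by omega)
      have hidx : x.length - 1 + 1 = x.length := by omega
      have hg2 : (x ++ a :: ([] : List (Fin q)))[x.length - 1 + 1]'(by rw [hzl]; omega)
          = a := by
        simp only [hidx]
        exact z_get_mid x [] a
      have he : (x ++ a :: ([] : List (Fin q)))[x.length - 1]'(by rw [hzl]; omega)
          = (x ++ a :: ([] : List (Fin q)))[x.length - 1 + 1]'(by rw [hzl]; omega) :=
        hg1.trans (hab.symm.trans hg2.symm)
      have hPz : P q (x ++ a :: ([] : List (Fin q))) = 0 :=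
        P_not_proper (not_proper (by rw [hzl]; omega) he)
      rw [hPz, mul_zero, if_pos hab]
      have hone := sum_onebad (w := x ++ a :: ([] : List (Fin q))) (k := x.length - 1)
        (by rw [hzl]; omega) he
        (fun jn : ℕ => C (q:ℝ) ((((x.length + (0 + 1) : ℕ)) : ℤ) - 2 * (jn:ℤ) - 1))
      have htrans : ∑ j : Fin (x.length + 1),
            C q ((((x.length + (0 + 1) : ℕ)) : ℤ) - 2 * (j:ℤ) - 1)
              * P q ((x ++ a :: ([] : List (Fin q))).eraseIdx (j:ℕ))
          = ∑ j : Fin (x ++ a :: ([] : List (Fin q))).length,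
            C q ((((x.length + (0 + 1) : ℕ)) : ℤ) - 2 * (j:ℤ) - 1)
              * P q ((x ++ a :: ([] : List (Fin q))).eraseIdx (j:ℕ)) :=
        sum_len_congr hzl.symm
          (fun jn : ℕ => C q ((((x.length + (0 + 1) : ℕ)) : ℤ) - 2 * (jn:ℤ) - 1)
            * P q ((x ++ a :: ([] : List (Fin q))).eraseIdx jn))
      have her : (x ++ a :: ([] : List (Fin q))).eraseIdx (x.length - 1) = x := by
        rw [eraseIdx_succ_eq _ (by rw [hzl]; omega) he,
          show x.length - 1 + 1 = x.length by omega, ez_mid, List.append_nil]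
      rw [htrans, hone, her,
        show ((((x.length + (0 + 1) : ℕ)) : ℤ) - 2 * (((x.length - 1 : ℕ)) : ℤ) - 1)
          = -((x.length : ℤ) - 2) by omega,
        show ((((x.length + (0 + 1) : ℕ)) : ℤ) - 2 * (((x.length - 1 + 1 : ℕ)) : ℤ) - 1)
          = -(x.length : ℤ) by omega, _root_.C_neg, _root_.C_neg]
      ring
    · rw [if_neg hab, sub_zero]
      have hpz : Proper (x ++ a :: ([] : List (Fin q))) :=
        proper_z hx List.isChain_nil (fun _ => fun he' => hab he'.symm)
          (fun h => absurd h (by simp))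
      have hrec := P_rec hq hpz (by simp)
      rw [hzl'] at hrec
      rw [show ((((x.length + (0 + 1) : ℕ)) : ℤ) + 1) = (x.length : ℤ) + 2 by omega] at hrec
      exact hrec
  have sumkey := Finset.sum_congr rfl
    (fun a (_ : a ∈ (Finset.univ : Finset (Fin q))) => key a)
  rw [← Finset.mul_sum, Finset.sum_sub_distrib] at sumkey
  have hK : ∑ a : Fin q, (if a = x[x.length - 1]'(by omega) then
      (C q ((x.length : ℤ) - 2) + C q (x.length : ℤ)) * P q x else 0)
      = (C q ((x.length : ℤ) - 2) + C q (x.length : ℤ)) * P q x := by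
    rw [Finset.sum_ite_eq']
    simp
  rw [hK, Finset.sum_comm, Fin.sum_univ_castSucc] at sumkey
  -- the last index : erased word is x itself
  have hlast : ∑ a : Fin q,
      C q ((((x.length + (0 + 1) : ℕ)) : ℤ) - 2 * (((Fin.last x.length):ℕ):ℤ) - 1)
        * P q ((x ++ a :: ([] : List (Fin q))).eraseIdx ((Fin.last x.length):ℕ))
      = (q:ℝ) * (C q (x.length : ℤ) * P q x) := by
    have hco : ((((x.length + (0 + 1) : ℕ)) : ℤ) - 2 * (((Fin.last x.length):ℕ):ℤ) - 1)
        = -(x.length : ℤ) := by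
      rw [Fin.val_last]; omega
    rw [hco, _root_.C_neg]
    have her : ∀ a : Fin q,
        (x ++ a :: ([] : List (Fin q))).eraseIdx ((Fin.last x.length):ℕ) = x := fun a => by
      rw [Fin.val_last, ez_mid, List.append_nil]
    simp only [her]
    rw [Finset.sum_const, Finset.card_univ, Fintype.card_fin, nsmul_eq_mul]
  rw [hlast] at sumkey
  -- the castSucc indices
  have hcs : ∀ j : Fin x.length, ∑ a : Fin q,
      C q ((((x.length + (0 + 1) : ℕ)) : ℤ) - 2 * (((j.castSucc):ℕ):ℤ) - 1)
        * P q ((x ++ a :: ([] : List (Fin q))).eraseIdx ((j.castSucc):ℕ))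
      = C q (((x.length : ℤ) - 2 * (j:ℤ) - 1) + 1) * P q (x.eraseIdx (j:ℕ)) := by
    intro j
    have hvl := j.isLt
    have hval : ((j.castSucc : Fin (x.length + 1)) : ℕ) = (j : ℕ) := rfl
    have hco : ((((x.length + (0 + 1) : ℕ)) : ℤ) - 2 * (((j.castSucc):ℕ):ℤ) - 1)
        = ((x.length : ℤ) - 2 * (j:ℤ) - 1) + 1 := by
      rw [hval]; omega
    have her : ∀ a : Fin q, (x ++ a :: ([] : List (Fin q))).eraseIdx ((j.castSucc):ℕ)
        = (x.eraseIdx (j:ℕ)) ++ a :: ([] : List (Fin q)) := fun a => by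
      rw [hval, ez_lt _ a hvl]
    have hih := ih (x.eraseIdx (j:ℕ)) []
      (by simp only [List.length_nil, List.length_eraseIdx]; split_ifs <;> omega)
    rw [P_nil, mul_one] at hih
    calc ∑ a : Fin q, C q ((((x.length + (0 + 1) : ℕ)) : ℤ) - 2 * (((j.castSucc):ℕ):ℤ) - 1)
          * P q ((x ++ a :: ([] : List (Fin q))).eraseIdx ((j.castSucc):ℕ))
        = ∑ a : Fin q, C q (((x.length : ℤ) - 2 * (j:ℤ) - 1) + 1)
            * P q ((x.eraseIdx (j:ℕ)) ++ a :: ([] : List (Fin q))) :=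
          Finset.sum_congr rfl (fun a _ => by rw [her a, hco])
      _ = C q (((x.length : ℤ) - 2 * (j:ℤ) - 1) + 1)
            * ∑ a : Fin q, P q ((x.eraseIdx (j:ℕ)) ++ a :: ([] : List (Fin q))) := by
          rw [Finset.mul_sum]
      _ = C q (((x.length : ℤ) - 2 * (j:ℤ) - 1) + 1) * P q (x.eraseIdx (j:ℕ)) := by
          rw [hih]
  have hrepl : (∑ j : Fin x.length, ∑ a : Fin q,
      C q ((((x.length + (0 + 1) : ℕ)) : ℤ) - 2 * (((j.castSucc):ℕ):ℤ) - 1)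
        * P q ((x ++ a :: ([] : List (Fin q))).eraseIdx ((j.castSucc):ℕ)))
      = C q 1 * (D q ((x.length : ℤ) + 1) * P q x)
        + (((q:ℝ) - 4) / (4 * (q:ℝ))) * D q 1 * 0 := by
    rw [Finset.sum_congr rfl (fun j _ => hcs j)]
    have hsplit : ∀ j : Fin x.length,
        C q (((x.length : ℤ) - 2 * (j:ℤ) - 1) + 1) * P q (x.eraseIdx (j:ℕ))
        = C q 1 * (C q ((x.length : ℤ) - 2 * (j:ℤ) - 1) * P q (x.eraseIdx (j:ℕ)))
          + (((q:ℝ) - 4) / (4 * (q:ℝ))) * D q 1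
            * (D q ((x.length : ℤ) - 2 * (j:ℤ) - 1) * P q (x.eraseIdx (j:ℕ))) := by
      intro j
      rw [C_mixed h4 ((x.length : ℤ) - 2 * (j:ℤ) - 1) 1]
      ring
    rw [Finset.sum_congr rfl (fun j _ => hsplit j), Finset.sum_add_distrib,
      ← Finset.mul_sum, ← Finset.mul_sum, ← P_rec hq hx hxne,
      lemL hq x.length x (le_refl _) hx]
  rw [hrepl] at sumkey
  rw [P_nil, mul_one]
  apply mul_left_cancel₀ (D_ne hq (show (1:ℤ) ≤ (x.length : ℤ) + 2 by omega))
  rw [sumkey]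
  linear_combination (P q x) * edge_id h4 (x.length : ℤ)


set_option maxHeartbeats 4000000 in
lemma step_main (hq : 4 ≤ q) {N : ℕ}
    (ih : ∀ x' y' : List (Fin q), x'.length + y'.length ≤ N →
      ∑ a : Fin q, P q (x' ++ a :: y') = P q x' * P q y')
    {x y : List (Fin q)} (hx : Proper x) (hy : Proper y) (hxne : x ≠ []) (hyne : y ≠ [])
    (hl : x.length + y.length ≤ N + 1) :
    ∑ a : Fin q, P q (x ++ a :: y) = P q x * P q y := by
  have h4 : (4:ℝ) ≤ (q:ℝ) := hq4 hq
  have h0 : (0:ℝ) ≤ (q:ℝ) := by linarith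
  have hx0 : 0 < x.length := List.length_pos_iff.mpr hxne
  have hy0 : 0 < y.length := List.length_pos_iff.mpr hyne
  have key : ∀ a : Fin q,
      D q ((((x.length + (y.length + 1) : ℕ)) : ℤ) + 1) * P q (x ++ a :: y)
      = (∑ j : Fin (x.length + (y.length + 1)),
          C q ((((x.length + (y.length + 1) : ℕ)) : ℤ) - 2 * (j:ℤ) - 1)
            * P q ((x ++ a :: y).eraseIdx (j:ℕ)))
        - ((if a = x[x.length - 1]'(by omega) then
              (C q ((y.length:ℤ) - (x.length:ℤ) + 2) + C q ((y.length:ℤ) - (x.length:ℤ)))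
                * P q (x ++ y) else 0)
          + (if a = y[0]'hy0 then
              (C q ((y.length:ℤ) - (x.length:ℤ)) + C q ((y.length:ℤ) - (x.length:ℤ) - 2))
                * P q (x ++ y) else 0)) := by
    intro a
    have hzl : (x ++ a :: y).length = x.length + (y.length + 1) := len_z x y a
    have hgb : (x ++ a :: y)[x.length - 1]'(by rw [hzl]; omega)
        = x[x.length - 1]'(by omega) := z_get_lt y a (by omega)
    have hidx : x.length - 1 + 1 = x.length := by omega
    have hgm : (x ++ a :: y)[x.length]'(by rw [hzl]; omega) = a := z_get_mid x y a
    have hgm' : (x ++ a :: y)[x.length - 1 + 1]'(by rw [hzl]; omega) = a := by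
      simp only [hidx]; exact hgm
    have hgc : (x ++ a :: y)[x.length + 1]'(by rw [hzl]; omega) = y[0]'hy0 := by
      have hidy : x.length + 1 + 0 = x.length + 1 := by omega
      have h := z_get_hi x a (j := 0) hy0
      simp only [hidy] at h
      exact h
    by_cases hab : a = x[x.length - 1]'(by omega)
    · by_cases hac : a = y[0]'hy0
      · -- a = b = c : two bad pairs, everything vanishes
        have hbc : x[x.length - 1]'(by omega) = y[0]'hy0 := hab.symm.trans hac
        have hPxy : P q (x ++ y) = 0 := P_not_proper (improper_append hxne hyne hbc)
        have he1 : (x ++ a :: y)[x.length - 1]'(by rw [hzl]; omega)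
            = (x ++ a :: y)[x.length - 1 + 1]'(by rw [hzl]; omega) :=
          hgb.trans (hab.symm.trans hgm'.symm)
        have hPz : P q (x ++ a :: y) = 0 :=
          P_not_proper (not_proper (by rw [hzl]; omega) he1)
        have hgc' : (x ++ a :: y)[x.length - 1 + 2]'(by rw [hzl]; omega) = y[0]'hy0 := by
          have hidw : x.length - 1 + 2 = x.length + 1 := by omega
          simp only [hidw]; exact hgc
        have he2 : (x ++ a :: y)[x.length - 1 + 1]'(by rw [hzl]; omega)
            = (x ++ a :: y)[x.length - 1 + 2]'(by rw [hzl]; omega) :=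
          hgm'.trans (hac.trans hgc'.symm)
        have htwo := sum_twobad (w := x ++ a :: y) (k := x.length - 1)
          (by rw [hzl]; omega) he1 he2
          (fun jn : ℕ => C (q:ℝ)
            ((((x.length + (y.length + 1) : ℕ)) : ℤ) - 2 * (jn:ℤ) - 1))
        have htrans : ∑ j : Fin (x.length + (y.length + 1)),
              C q ((((x.length + (y.length + 1) : ℕ)) : ℤ) - 2 * (j:ℤ) - 1)
                * P q ((x ++ a :: y).eraseIdx (j:ℕ))
            = ∑ j : Fin (x ++ a :: y).length,
              C q ((((x.length + (y.length + 1) : ℕ)) : ℤ) - 2 * (j:ℤ) - 1)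
                * P q ((x ++ a :: y).eraseIdx (j:ℕ)) :=
          sum_len_congr hzl.symm
            (fun jn : ℕ => C q ((((x.length + (y.length + 1) : ℕ)) : ℤ) - 2 * (jn:ℤ) - 1)
              * P q ((x ++ a :: y).eraseIdx jn))
        rw [hPz, mul_zero, htrans, htwo, if_pos hab, if_pos hac, hPxy]
        ring
      · -- a = b ≠ c : one bad pair at x.length - 1
        have he1 : (x ++ a :: y)[x.length - 1]'(by rw [hzl]; omega)
            = (x ++ a :: y)[x.length - 1 + 1]'(by rw [hzl]; omega) :=
          hgb.trans (hab.symm.trans hgm'.symm)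
        have hPz : P q (x ++ a :: y) = 0 :=
          P_not_proper (not_proper (by rw [hzl]; omega) he1)
        have hone := sum_onebad (w := x ++ a :: y) (k := x.length - 1)
          (by rw [hzl]; omega) he1
          (fun jn : ℕ => C (q:ℝ)
            ((((x.length + (y.length + 1) : ℕ)) : ℤ) - 2 * (jn:ℤ) - 1))
        have htrans : ∑ j : Fin (x.length + (y.length + 1)),
              C q ((((x.length + (y.length + 1) : ℕ)) : ℤ) - 2 * (j:ℤ) - 1)
                * P q ((x ++ a :: y).eraseIdx (j:ℕ))
            = ∑ j : Fin (x ++ a :: y).length,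
              C q ((((x.length + (y.length + 1) : ℕ)) : ℤ) - 2 * (j:ℤ) - 1)
                * P q ((x ++ a :: y).eraseIdx (j:ℕ)) :=
          sum_len_congr hzl.symm
            (fun jn : ℕ => C q ((((x.length + (y.length + 1) : ℕ)) : ℤ) - 2 * (jn:ℤ) - 1)
              * P q ((x ++ a :: y).eraseIdx jn))
        have her : (x ++ a :: y).eraseIdx (x.length - 1) = x ++ y := by
          rw [eraseIdx_succ_eq _ (by rw [hzl]; omega) he1]
          simp only [hidx]
          exact ez_mid x y a
        rw [hPz, mul_zero, htrans, hone, her, if_pos hab, if_neg hac,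
          show ((((x.length + (y.length + 1) : ℕ)) : ℤ)
              - 2 * (((x.length - 1 : ℕ)) : ℤ) - 1)
            = (y.length:ℤ) - (x.length:ℤ) + 2 by omega,
          show ((((x.length + (y.length + 1) : ℕ)) : ℤ)
              - 2 * (((x.length - 1 + 1 : ℕ)) : ℤ) - 1)
            = (y.length:ℤ) - (x.length:ℤ) by omega]
        ring
    · by_cases hac : a = y[0]'hy0
      · -- a = c ≠ b : one bad pair at x.length
        have hgc'' : (x ++ a :: y)[x.length + 1]'(by rw [hzl]; omega) = y[0]'hy0 := hgc
        have he1 : (x ++ a :: y)[x.length]'(by rw [hzl]; omega)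
            = (x ++ a :: y)[x.length + 1]'(by rw [hzl]; omega) :=
          hgm.trans (hac.trans hgc''.symm)
        have hPz : P q (x ++ a :: y) = 0 :=
          P_not_proper (not_proper (by rw [hzl]; omega) he1)
        have hone := sum_onebad (w := x ++ a :: y) (k := x.length)
          (by rw [hzl]; omega) he1
          (fun jn : ℕ => C (q:ℝ)
            ((((x.length + (y.length + 1) : ℕ)) : ℤ) - 2 * (jn:ℤ) - 1))
        have htrans : ∑ j : Fin (x.length + (y.length + 1)),
              C q ((((x.length + (y.length + 1) : ℕ)) : ℤ) - 2 * (j:ℤ) - 1)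
                * P q ((x ++ a :: y).eraseIdx (j:ℕ))
            = ∑ j : Fin (x ++ a :: y).length,
              C q ((((x.length + (y.length + 1) : ℕ)) : ℤ) - 2 * (j:ℤ) - 1)
                * P q ((x ++ a :: y).eraseIdx (j:ℕ)) :=
          sum_len_congr hzl.symm
            (fun jn : ℕ => C q ((((x.length + (y.length + 1) : ℕ)) : ℤ) - 2 * (jn:ℤ) - 1)
              * P q ((x ++ a :: y).eraseIdx jn))
        rw [hPz, mul_zero, htrans, hone, ez_mid x y a, if_neg hab, if_pos hac,
          show ((((x.length + (y.length + 1) : ℕ)) : ℤ)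
              - 2 * ((x.length : ℕ) : ℤ) - 1)
            = (y.length:ℤ) - (x.length:ℤ) by omega,
          show ((((x.length + (y.length + 1) : ℕ)) : ℤ)
              - 2 * (((x.length + 1 : ℕ)) : ℤ) - 1)
            = (y.length:ℤ) - (x.length:ℤ) - 2 by omega]
        ring
      · -- proper
        rw [if_neg hab, if_neg hac, add_zero, sub_zero]
        have hpz : Proper (x ++ a :: y) :=
          proper_z hx hy (fun _ => fun he' => hab he'.symm) (fun _ => hac)
        have hrec := P_rec hq hpz (by simp)
        rw [hzl] at hrec
        exact hrec
  have sumkey := Finset.sum_congr rfl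
    (fun a (_ : a ∈ (Finset.univ : Finset (Fin q))) => key a)
  rw [← Finset.mul_sum, Finset.sum_sub_distrib, Finset.sum_add_distrib] at sumkey
  have hK1 : ∑ a : Fin q, (if a = x[x.length - 1]'(by omega) then
      (C q ((y.length:ℤ) - (x.length:ℤ) + 2) + C q ((y.length:ℤ) - (x.length:ℤ)))
        * P q (x ++ y) else 0)
      = (C q ((y.length:ℤ) - (x.length:ℤ) + 2) + C q ((y.length:ℤ) - (x.length:ℤ)))
        * P q (x ++ y) := by
    rw [Finset.sum_ite_eq']
    simp
  have hK2 : ∑ a : Fin q, (if a = y[0]'hy0 then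
      (C q ((y.length:ℤ) - (x.length:ℤ)) + C q ((y.length:ℤ) - (x.length:ℤ) - 2))
        * P q (x ++ y) else 0)
      = (C q ((y.length:ℤ) - (x.length:ℤ)) + C q ((y.length:ℤ) - (x.length:ℤ) - 2))
        * P q (x ++ y) := by
    rw [Finset.sum_ite_eq']
    simp
  rw [hK1, hK2, Finset.sum_comm, Fin.sum_univ_add, Fin.sum_univ_succ] at sumkey
  -- part A : deletions inside x
  have hA : ∀ j : Fin x.length, ∑ a : Fin q,
      C q ((((x.length + (y.length + 1) : ℕ)) : ℤ)
          - 2 * (((Fin.castAdd (y.length + 1) j : Fin (x.length + (y.length + 1))):ℕ):ℤ) - 1)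
        * P q ((x ++ a :: y).eraseIdx
            ((Fin.castAdd (y.length + 1) j : Fin (x.length + (y.length + 1))):ℕ))
      = C q (((x.length:ℤ) - 2 * (j:ℤ) - 1) + ((y.length:ℤ) + 1))
          * (P q (x.eraseIdx (j:ℕ)) * P q y) := by
    intro j
    have hvl := j.isLt
    have hval : ((Fin.castAdd (y.length + 1) j : Fin (x.length + (y.length + 1))):ℕ)
        = (j:ℕ) := rfl
    have hco : ((((x.length + (y.length + 1) : ℕ)) : ℤ)
        - 2 * (((Fin.castAdd (y.length + 1) j : Fin (x.length + (y.length + 1))):ℕ):ℤ) - 1)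
        = ((x.length:ℤ) - 2 * (j:ℤ) - 1) + ((y.length:ℤ) + 1) := by
      rw [hval]; omega
    have her : ∀ a : Fin q, (x ++ a :: y).eraseIdx
        ((Fin.castAdd (y.length + 1) j : Fin (x.length + (y.length + 1))):ℕ)
        = (x.eraseIdx (j:ℕ)) ++ a :: y := fun a => by
      rw [hval]; exact ez_lt y a hvl
    have hih := ih (x.eraseIdx (j:ℕ)) y
      (by simp only [List.length_eraseIdx]; split_ifs <;> omega)
    calc ∑ a : Fin q, C q ((((x.length + (y.length + 1) : ℕ)) : ℤ)
          - 2 * (((Fin.castAdd (y.length + 1) j : Fin (x.length + (y.length + 1))):ℕ):ℤ) - 1)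
          * P q ((x ++ a :: y).eraseIdx
              ((Fin.castAdd (y.length + 1) j : Fin (x.length + (y.length + 1))):ℕ))
        = ∑ a : Fin q, C q (((x.length:ℤ) - 2 * (j:ℤ) - 1) + ((y.length:ℤ) + 1))
            * P q ((x.eraseIdx (j:ℕ)) ++ a :: y) :=
          Finset.sum_congr rfl (fun a _ => by rw [her a, hco])
      _ = C q (((x.length:ℤ) - 2 * (j:ℤ) - 1) + ((y.length:ℤ) + 1))
            * ∑ a : Fin q, P q ((x.eraseIdx (j:ℕ)) ++ a :: y) := by rw [Finset.mul_sum]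
      _ = C q (((x.length:ℤ) - 2 * (j:ℤ) - 1) + ((y.length:ℤ) + 1))
            * (P q (x.eraseIdx (j:ℕ)) * P q y) := by rw [hih]
  -- middle deletion
  have hmid : ∑ a : Fin q,
      C q ((((x.length + (y.length + 1) : ℕ)) : ℤ)
          - 2 * (((Fin.natAdd x.length (0 : Fin (y.length + 1))):ℕ):ℤ) - 1)
        * P q ((x ++ a :: y).eraseIdx ((Fin.natAdd x.length (0 : Fin (y.length + 1))):ℕ))
      = (q:ℝ) * (C q ((y.length:ℤ) - (x.length:ℤ)) * P q (x ++ y)) := by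
    have hval : ((Fin.natAdd x.length (0 : Fin (y.length + 1))):ℕ) = x.length := rfl
    have hco : ((((x.length + (y.length + 1) : ℕ)) : ℤ)
        - 2 * (((Fin.natAdd x.length (0 : Fin (y.length + 1))):ℕ):ℤ) - 1)
        = (y.length:ℤ) - (x.length:ℤ) := by
      rw [hval]; omega
    have her : ∀ a : Fin q,
        (x ++ a :: y).eraseIdx ((Fin.natAdd x.length (0 : Fin (y.length + 1))):ℕ)
        = x ++ y := fun a => by rw [hval]; exact ez_mid x y a
    rw [hco]
    simp only [her]
    rw [Finset.sum_const, Finset.card_univ, Fintype.card_fin, nsmul_eq_mul]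
  -- part B : deletions inside y
  have hB : ∀ j1 : Fin y.length, ∑ a : Fin q,
      C q ((((x.length + (y.length + 1) : ℕ)) : ℤ)
          - 2 * (((Fin.natAdd x.length j1.succ):ℕ):ℤ) - 1)
        * P q ((x ++ a :: y).eraseIdx ((Fin.natAdd x.length j1.succ):ℕ))
      = C q (((y.length:ℤ) - 2 * (j1:ℤ) - 1) - ((x.length:ℤ) + 1))
          * (P q x * P q (y.eraseIdx (j1:ℕ))) := by
    intro j1
    have hval : ((Fin.natAdd x.length j1.succ):ℕ) = x.length + ((j1:ℕ) + 1) := rfl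
    have hco : ((((x.length + (y.length + 1) : ℕ)) : ℤ)
        - 2 * (((Fin.natAdd x.length j1.succ):ℕ):ℤ) - 1)
        = ((y.length:ℤ) - 2 * (j1:ℤ) - 1) - ((x.length:ℤ) + 1) := by
      have hvl := j1.isLt
      rw [hval]; omega
    have her : ∀ a : Fin q,
        (x ++ a :: y).eraseIdx ((Fin.natAdd x.length j1.succ):ℕ)
        = x ++ a :: (y.eraseIdx (j1:ℕ)) := fun a => by
      rw [hval]; exact ez_hi x y a (j1:ℕ)
    have hih := ih x (y.eraseIdx (j1:ℕ))
      (by simp only [List.length_eraseIdx]; split_ifs <;> omega)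
    calc ∑ a : Fin q, C q ((((x.length + (y.length + 1) : ℕ)) : ℤ)
          - 2 * (((Fin.natAdd x.length j1.succ):ℕ):ℤ) - 1)
          * P q ((x ++ a :: y).eraseIdx ((Fin.natAdd x.length j1.succ):ℕ))
        = ∑ a : Fin q, C q (((y.length:ℤ) - 2 * (j1:ℤ) - 1) - ((x.length:ℤ) + 1))
            * P q (x ++ a :: (y.eraseIdx (j1:ℕ))) :=
          Finset.sum_congr rfl (fun a _ => by rw [her a, hco])
      _ = C q (((y.length:ℤ) - 2 * (j1:ℤ) - 1) - ((x.length:ℤ) + 1))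
            * ∑ a : Fin q, P q (x ++ a :: (y.eraseIdx (j1:ℕ))) := by rw [Finset.mul_sum]
      _ = C q (((y.length:ℤ) - 2 * (j1:ℤ) - 1) - ((x.length:ℤ) + 1))
            * (P q x * P q (y.eraseIdx (j1:ℕ))) := by rw [hih]
  have hApart : (∑ j : Fin x.length, ∑ a : Fin q,
      C q ((((x.length + (y.length + 1) : ℕ)) : ℤ)
          - 2 * (((Fin.castAdd (y.length + 1) j : Fin (x.length + (y.length + 1))):ℕ):ℤ) - 1)
        * P q ((x ++ a :: y).eraseIdx
            ((Fin.castAdd (y.length + 1) j : Fin (x.length + (y.length + 1))):ℕ)))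
      = (C q ((y.length:ℤ) + 1) * P q y) * (D q ((x.length:ℤ) + 1) * P q x)
        + ((((q:ℝ) - 4) / (4 * (q:ℝ))) * D q ((y.length:ℤ) + 1) * P q y) * 0 := by
    rw [Finset.sum_congr rfl (fun j _ => hA j)]
    have hsplit : ∀ j : Fin x.length,
        C q (((x.length:ℤ) - 2 * (j:ℤ) - 1) + ((y.length:ℤ) + 1))
          * (P q (x.eraseIdx (j:ℕ)) * P q y)
        = (C q ((y.length:ℤ) + 1) * P q y)
            * (C q ((x.length:ℤ) - 2 * (j:ℤ) - 1) * P q (x.eraseIdx (j:ℕ)))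
          + ((((q:ℝ) - 4) / (4 * (q:ℝ))) * D q ((y.length:ℤ) + 1) * P q y)
            * (D q ((x.length:ℤ) - 2 * (j:ℤ) - 1) * P q (x.eraseIdx (j:ℕ))) := by
      intro j
      rw [C_mixed h4 ((x.length:ℤ) - 2 * (j:ℤ) - 1) ((y.length:ℤ) + 1)]
      ring
    rw [Finset.sum_congr rfl (fun j _ => hsplit j), Finset.sum_add_distrib,
      ← Finset.mul_sum, ← Finset.mul_sum, ← P_rec hq hx hxne,
      lemL hq x.length x (le_refl _) hx]
  have hBpart : (∑ j1 : Fin y.length, ∑ a : Fin q,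
      C q ((((x.length + (y.length + 1) : ℕ)) : ℤ)
          - 2 * (((Fin.natAdd x.length j1.succ):ℕ):ℤ) - 1)
        * P q ((x ++ a :: y).eraseIdx ((Fin.natAdd x.length j1.succ):ℕ)))
      = (C q ((x.length:ℤ) + 1) * P q x) * (D q ((y.length:ℤ) + 1) * P q y)
        - ((((q:ℝ) - 4) / (4 * (q:ℝ))) * D q ((x.length:ℤ) + 1) * P q x) * 0 := by
    rw [Finset.sum_congr rfl (fun j1 _ => hB j1)]
    have hsplit : ∀ j1 : Fin y.length,
        C q (((y.length:ℤ) - 2 * (j1:ℤ) - 1) - ((x.length:ℤ) + 1))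
          * (P q x * P q (y.eraseIdx (j1:ℕ)))
        = (C q ((x.length:ℤ) + 1) * P q x)
            * (C q ((y.length:ℤ) - 2 * (j1:ℤ) - 1) * P q (y.eraseIdx (j1:ℕ)))
          - ((((q:ℝ) - 4) / (4 * (q:ℝ))) * D q ((x.length:ℤ) + 1) * P q x)
            * (D q ((y.length:ℤ) - 2 * (j1:ℤ) - 1) * P q (y.eraseIdx (j1:ℕ))) := by
      intro j1
      rw [C_sub_mixed h4 ((y.length:ℤ) - 2 * (j1:ℤ) - 1) ((x.length:ℤ) + 1)]
      ring
    rw [Finset.sum_congr rfl (fun j1 _ => hsplit j1), Finset.sum_sub_distrib,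
      ← Finset.mul_sum, ← Finset.mul_sum, ← P_rec hq hy hyne,
      lemL hq y.length y (le_refl _) hy]
  rw [hApart, hmid, hBpart] at sumkey
  apply mul_left_cancel₀
    (D_ne hq (show (1:ℤ) ≤ (((x.length + (y.length + 1) : ℕ)) : ℤ) + 1 by omega))
  rw [sumkey,
    show ((((x.length + (y.length + 1) : ℕ)) : ℤ) + 1)
      = ((x.length:ℤ) + 1) + ((y.length:ℤ) + 1) by omega,
    D_add h0 ((x.length:ℤ) + 1) ((y.length:ℤ) + 1)]
  linear_combination (P q (x ++ y)) * brack h0 ((y.length:ℤ) - (x.length:ℤ))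


lemma aux (hq : 4 ≤ q) : ∀ N : ℕ, ∀ x y : List (Fin q), x.length + y.length ≤ N →
    ∑ a : Fin q, P q (x ++ a :: y) = P q x * P q y := by
  intro N
  induction N with
  | zero =>
    intro x y hl
    have hx : x = [] := List.length_eq_zero_iff.mp (by omega)
    have hy : y = [] := List.length_eq_zero_iff.mp (by omega)
    subst hx; subst hy
    exact base_case hq
  | succ N ih =>
    intro x y hl
    by_cases hx : Proper x
    · by_cases hy : Proper y
      · rcases eq_or_ne x [] with rfl | hxne
        · rcases eq_or_ne y [] with rfl | hyne
          · exact base_case hq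
          · exact step_left hq ih hy hyne (by simpa using hl)
        · rcases eq_or_ne y [] with rfl | hyne
          · exact step_right hq ih hx hxne (by simpa using hl)
          · exact step_main hq ih hx hy hxne hyne hl
      · exact improper_right x hy
    · exact improper_left y hx

end MainThm

-- END --

theorem P_one_dependent (q : ℕ) (hq : 4 ≤ q) (x y : List (Fin q)) :
    ∑ a : Fin q, P q (x ++ a :: y) = P q x * P q y :=
  aux hq (x.length + y.length) x y (le_refl _)
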